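/- arXiv:1512.02918 — 2 statements merged into one kernel-verified Lean document; each statement's English description precedes it below -/
import Mathlib

section
/- Under the structured RIP with δ_P, δ_{2P} < 1, for block-index sets Ω̂ and Ω_T each of cardinality ≤ P, if D is supported on Ω_T then ‖Ψ_{Ω̂}^† Ψ_{Ω_T∖Ω̂} D_{Ω_T∖Ω̂}‖_F ≤ (δ_{2P}/(1−δ_P)) ‖D_{Ω_T∖Ω̂}‖_F. -/
open scoped BigOperators
open Matrix
noncomputable section

variable {Np M L R : ℕ}

/-- Frobenius norm of a complex matrix. -/
def frob {m n : Type*} [Fintype m] [Fintype n] (A : Matrix m n ℂ) : ℝ :=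
  Real.sqrt (∑ i, ∑ j, ‖A i j‖ ^ 2)

/-- `D` is block-supported on the block-index set `Ω`. -/
def SuppOn (Ω : Finset (Fin L)) (D : Matrix (Fin L × Fin M) (Fin R) ℂ) : Prop :=
  ∀ p r, p.1 ∉ Ω → D p r = 0

/-- Column-block submatrix `Ψ_Ω` of `Ψ`. -/
def bsub (Ψ : Matrix (Fin Np) (Fin L × Fin M) ℂ) (Ω : Finset (Fin L)) :
    Matrix (Fin Np) ({l // l ∈ Ω} × Fin M) ℂ :=
  Ψ.submatrix id (fun q => ((q.1 : Fin L), q.2))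

/-- Row-block submatrix `D_Ω` of `D`. -/
def rsub (D : Matrix (Fin L × Fin M) (Fin R) ℂ) (Ω : Finset (Fin L)) :
    Matrix ({l // l ∈ Ω} × Fin M) (Fin R) ℂ :=
  D.submatrix (fun q => ((q.1 : Fin L), q.2)) id

/-- Moore–Penrose pseudoinverse `Ψ_Ω^† = (Ψ_Ωᴴ Ψ_Ω)⁻¹ Ψ_Ωᴴ` of the column-block submatrix. -/
def bpinv (Ψ : Matrix (Fin Np) (Fin L × Fin M) ℂ) (Ω : Finset (Fin L)) :
    Matrix ({l // l ∈ Ω} × Fin M) (Fin Np) ℂ :=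
  ((bsub Ψ Ω)ᴴ * bsub Ψ Ω)⁻¹ * (bsub Ψ Ω)ᴴ

/-- Re-embed a matrix indexed by the blocks of `Ω` as a full `ML × R` matrix, zero outside `Ω`. -/
def expand (Ω : Finset (Fin L)) (X : Matrix ({l // l ∈ Ω} × Fin M) (Fin R) ℂ) :
    Matrix (Fin L × Fin M) (Fin R) ℂ :=
  fun p r => if h : p.1 ∈ Ω then X (⟨p.1, h⟩, p.2) r else 0

/-- Structured (block) RIP of order `P` with constant `δ`. -/
def SRIP (Ψ : Matrix (Fin Np) (Fin L × Fin M) ℂ) (P : ℕ) (δ : ℝ) : Prop :=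
  ∀ Ω : Finset (Fin L), Ω.card ≤ P →
    ∀ D : Matrix (Fin L × Fin M) (Fin R) ℂ, SuppOn Ω D →
      (1 - δ) * frob D ^ 2 ≤ frob (Ψ * D) ^ 2 ∧ frob (Ψ * D) ^ 2 ≤ (1 + δ) * frob D ^ 2

set_option linter.unusedSectionVars false
set_option linter.unusedVariables false

section Aux

variable {α β : Type*} [Fintype α] [Fintype β]

def rinner {α : Type*} [Fintype α] {R : ℕ} (X Y : Matrix α (Fin R) ℂ) : ℝ :=
  (Matrix.trace (Xᴴ * Y)).re

variable {α β : Type*} [Fintype α] [Fintype β]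

lemma rinner_self (X : Matrix α (Fin R) ℂ) : rinner X X = ∑ i, ∑ j, ‖X i j‖ ^ 2 := by
  simp only [rinner, Matrix.trace, Matrix.diag, Matrix.mul_apply, Matrix.conjTranspose_apply,
    Complex.re_sum]
  rw [Finset.sum_comm]
  refine Finset.sum_congr rfl fun i _ => Finset.sum_congr rfl fun j _ => ?_
  rw [Complex.star_def, mul_comm, Complex.mul_conj, Complex.ofReal_re,
    Complex.normSq_eq_norm_sq]

lemma frob_sq (X : Matrix α (Fin R) ℂ) : frob X ^ 2 = rinner X X := by
  rw [rinner_self, frob, Real.sq_sqrt]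
  positivity

lemma frob_nonneg (X : Matrix α (Fin R) ℂ) : 0 ≤ frob X := Real.sqrt_nonneg _

lemma rinner_self_nonneg (X : Matrix α (Fin R) ℂ) : 0 ≤ rinner X X := by
  rw [rinner_self]; positivity

lemma eq_zero_of_frob_eq_zero {X : Matrix α (Fin R) ℂ} (h : frob X = 0) : X = 0 := by
  have h0 : (∑ i, ∑ j, ‖X i j‖ ^ 2) = 0 := by
    have := Real.sqrt_eq_zero (by positivity : (0:ℝ) ≤ ∑ i, ∑ j, ‖X i j‖ ^ 2)
    exact this.mp h
  ext i j
  have h1 := (Finset.sum_eq_zero_iff_of_nonneg (fun i _ => by positivity)).mp h0 i (Finset.mem_univ i)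
  have h2 := (Finset.sum_eq_zero_iff_of_nonneg (fun j _ => by positivity)).mp h1 j (Finset.mem_univ j)
  simpa using h2

lemma rinner_mul_left (A : Matrix β α ℂ) (X : Matrix α (Fin R) ℂ) (Y : Matrix β (Fin R) ℂ) :
    rinner (A * X) Y = rinner X (Aᴴ * Y) := by
  simp [rinner, Matrix.conjTranspose_mul, Matrix.mul_assoc]

lemma rinner_comm (X Y : Matrix α (Fin R) ℂ) : rinner X Y = rinner Y X := by
  unfold rinner
  rw [show Yᴴ * X = (Xᴴ * Y)ᴴ by simp [Matrix.conjTranspose_mul], Matrix.trace_conjTranspose]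
  exact (Complex.conj_re _).symm

lemma rinner_add_right (X Y Z : Matrix α (Fin R) ℂ) :
    rinner X (Y + Z) = rinner X Y + rinner X Z := by
  simp [rinner, Matrix.mul_add]

lemma rinner_sub_right (X Y Z : Matrix α (Fin R) ℂ) :
    rinner X (Y - Z) = rinner X Y - rinner X Z := by
  simp [rinner, Matrix.mul_sub]

lemma rinner_add_left (X Y Z : Matrix α (Fin R) ℂ) :
    rinner (X + Y) Z = rinner X Z + rinner Y Z := by
  simp [rinner, Matrix.conjTranspose_add, Matrix.add_mul]

lemma rinner_sub_left (X Y Z : Matrix α (Fin R) ℂ) :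
    rinner (X - Y) Z = rinner X Z - rinner Y Z := by
  simp [rinner, Matrix.conjTranspose_sub, Matrix.sub_mul]

lemma rinner_zero_right (X : Matrix α (Fin R) ℂ) (Y : Matrix β (Fin R) ℂ) :
    rinner X (0 : Matrix α (Fin R) ℂ) = 0 := by
  simp [rinner]

lemma rinner_smul (t s : ℝ) (X Y : Matrix α (Fin R) ℂ) :
    rinner ((t : ℂ) • X) ((s : ℂ) • Y) = t * s * rinner X Y := by
  simp only [rinner, Matrix.conjTranspose_smul, Matrix.smul_mul, Matrix.mul_smul,
    Matrix.trace_smul, smul_smul]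
  rw [Complex.star_def, Complex.conj_ofReal, smul_eq_mul, ← Complex.ofReal_mul,
    Complex.re_ofReal_mul]
  ring





lemma sum_expand_aux {γ : Type*} [AddCommMonoid γ] (Ω : Finset (Fin L))
    (f : (Fin L × Fin M) → γ) (h0 : ∀ p, p.1 ∉ Ω → f p = 0) :
    ∑ p, f p = ∑ q : {l // l ∈ Ω} × Fin M, f (q.1.1, q.2) := by
  rw [Fintype.sum_prod_type, Fintype.sum_prod_type]
  rw [← Finset.sum_subset (Finset.subset_univ Ω)
    (fun l _ hl => Finset.sum_eq_zero fun m _ => h0 (l, m) hl)]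
  exact Finset.sum_subtype Ω (fun _ => Iff.rfl) _

lemma mul_expand (Ψ : Matrix (Fin Np) (Fin L × Fin M) ℂ) (Ω : Finset (Fin L))
    (X : Matrix ({l // l ∈ Ω} × Fin M) (Fin R) ℂ) :
    Ψ * expand Ω X = bsub Ψ Ω * X := by
  ext i r
  rw [Matrix.mul_apply, Matrix.mul_apply,
    sum_expand_aux Ω (fun p => Ψ i p * expand Ω X p r)
      (fun p hp => by simp [expand, hp])]
  refine Finset.sum_congr rfl fun q _ => ?_
  simp [bsub, expand, q.1.2]

lemma frob_expand (Ω : Finset (Fin L)) (X : Matrix ({l // l ∈ Ω} × Fin M) (Fin R) ℂ) :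
    frob (expand Ω X) = frob X := by
  unfold frob
  congr 1
  rw [sum_expand_aux Ω (fun p => ∑ j, ‖expand Ω X p j‖ ^ 2)
      (fun p hp => by simp [expand, hp])]
  refine Finset.sum_congr rfl fun q _ => Finset.sum_congr rfl fun j _ => ?_
  simp [expand, q.1.2]

lemma suppOn_expand (Ω Ω' : Finset (Fin L)) (h : Ω ⊆ Ω')
    (X : Matrix ({l // l ∈ Ω} × Fin M) (Fin R) ℂ) : SuppOn Ω' (expand Ω X) := by
  intro p r hp
  simp only [expand]
  rw [dif_neg (fun hin => hp (h hin))]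

lemma rinner_expand_disjoint {Ω1 Ω2 : Finset (Fin L)} (h : Disjoint Ω1 Ω2)
    (X : Matrix ({l // l ∈ Ω1} × Fin M) (Fin R) ℂ)
    (Y : Matrix ({l // l ∈ Ω2} × Fin M) (Fin R) ℂ) :
    rinner (expand Ω1 X) (expand Ω2 Y) = 0 := by
  have : (expand Ω1 X)ᴴ * expand Ω2 Y = 0 := by
    ext j r
    rw [Matrix.mul_apply]
    refine Finset.sum_eq_zero fun p _ => ?_
    by_cases hp : p.1 ∈ Ω1
    · have : p.1 ∉ Ω2 := fun h2 => (Finset.disjoint_left.mp h) hp h2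
      simp [expand, this]
    · simp [expand, hp]
  simp [rinner, this]

lemma cross_half {Ψ : Matrix (Fin Np) (Fin L × Fin M) ℂ} {P : ℕ} {δ : ℝ}
    (hRIP : SRIP (R := R) Ψ (2 * P) δ) {Ω1 Ω2 : Finset (Fin L)} (hdisj : Disjoint Ω1 Ω2)
    (hcard : Ω1.card + Ω2.card ≤ 2 * P)
    (X : Matrix ({l // l ∈ Ω1} × Fin M) (Fin R) ℂ)
    (Y : Matrix ({l // l ∈ Ω2} × Fin M) (Fin R) ℂ) :
    rinner (bsub Ψ Ω1 * X) (bsub Ψ Ω2 * Y) ≤ δ / 2 * (rinner X X + rinner Y Y) := by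
  set Dx := expand Ω1 X with hDx
  set Dy := expand Ω2 Y with hDy
  have hcardU : (Ω1 ∪ Ω2).card ≤ 2 * P :=
    le_trans (Finset.card_union_le _ _) hcard
  have hs1 : SuppOn (Ω1 ∪ Ω2) (Dx + Dy) := by
    intro p r hp
    have h1 := suppOn_expand Ω1 (Ω1 ∪ Ω2) Finset.subset_union_left X p r hp
    have h2 := suppOn_expand Ω2 (Ω1 ∪ Ω2) Finset.subset_union_right Y p r hp
    simp [hDx, hDy, Matrix.add_apply, h1, h2]
  have hs2 : SuppOn (Ω1 ∪ Ω2) (Dx - Dy) := by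
    intro p r hp
    have h1 := suppOn_expand Ω1 (Ω1 ∪ Ω2) Finset.subset_union_left X p r hp
    have h2 := suppOn_expand Ω2 (Ω1 ∪ Ω2) Finset.subset_union_right Y p r hp
    simp [hDx, hDy, Matrix.sub_apply, h1, h2]
  have h1 := (hRIP (Ω1 ∪ Ω2) hcardU (Dx + Dy) hs1).2
  have h2 := (hRIP (Ω1 ∪ Ω2) hcardU (Dx - Dy) hs2).1
  have hmulx : Ψ * Dx = bsub Ψ Ω1 * X := mul_expand Ψ Ω1 X
  have hmuly : Ψ * Dy = bsub Ψ Ω2 * Y := mul_expand Ψ Ω2 Y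
  have hxy0 : rinner Dx Dy = 0 := rinner_expand_disjoint hdisj X Y
  have hyx0 : rinner Dy Dx = 0 := by rw [rinner_comm]; exact hxy0
  have hxx : rinner Dx Dx = rinner X X := by
    rw [← frob_sq, ← frob_sq, frob_expand]
  have hyy : rinner Dy Dy = rinner Y Y := by
    rw [← frob_sq, ← frob_sq, frob_expand]
  have e1 : frob (Ψ * (Dx + Dy)) ^ 2 =
      rinner (bsub Ψ Ω1 * X) (bsub Ψ Ω1 * X) + rinner (bsub Ψ Ω2 * Y) (bsub Ψ Ω2 * Y)
        + 2 * rinner (bsub Ψ Ω1 * X) (bsub Ψ Ω2 * Y) := by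
    rw [Matrix.mul_add, hmulx, hmuly, frob_sq, rinner_add_left, rinner_add_right,
      rinner_add_right, rinner_comm (bsub Ψ Ω2 * Y) (bsub Ψ Ω1 * X)]
    ring
  have e2 : frob (Ψ * (Dx - Dy)) ^ 2 =
      rinner (bsub Ψ Ω1 * X) (bsub Ψ Ω1 * X) + rinner (bsub Ψ Ω2 * Y) (bsub Ψ Ω2 * Y)
        - 2 * rinner (bsub Ψ Ω1 * X) (bsub Ψ Ω2 * Y) := by
    rw [Matrix.mul_sub, hmulx, hmuly, frob_sq, rinner_sub_left, rinner_sub_right,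
      rinner_sub_right, rinner_comm (bsub Ψ Ω2 * Y) (bsub Ψ Ω1 * X)]
    ring
  have f1 : frob (Dx + Dy) ^ 2 = rinner X X + rinner Y Y := by
    rw [frob_sq, rinner_add_left, rinner_add_right, rinner_add_right, hxy0, hyx0, hxx, hyy]
    ring
  have f2 : frob (Dx - Dy) ^ 2 = rinner X X + rinner Y Y := by
    rw [frob_sq, rinner_sub_left, rinner_sub_right, rinner_sub_right, hxy0, hyx0, hxx, hyy]
    ring
  rw [f1] at h1
  rw [f2] at h2
  rw [e1] at h1
  rw [e2] at h2
  linarith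

lemma cross {Ψ : Matrix (Fin Np) (Fin L × Fin M) ℂ} {P : ℕ} {δ : ℝ}
    (hRIP : SRIP (R := R) Ψ (2 * P) δ) {Ω1 Ω2 : Finset (Fin L)} (hdisj : Disjoint Ω1 Ω2)
    (hcard : Ω1.card + Ω2.card ≤ 2 * P)
    (X : Matrix ({l // l ∈ Ω1} × Fin M) (Fin R) ℂ)
    (Y : Matrix ({l // l ∈ Ω2} × Fin M) (Fin R) ℂ) :
    rinner (bsub Ψ Ω1 * X) (bsub Ψ Ω2 * Y) ≤ δ * frob X * frob Y := by
  by_cases hx : frob X = 0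
  · rw [hx, eq_zero_of_frob_eq_zero hx]
    simp [rinner]
  by_cases hy : frob Y = 0
  · rw [hy, eq_zero_of_frob_eq_zero hy]
    simp [rinner]
  have hx' : 0 < frob X := lt_of_le_of_ne (frob_nonneg X) (Ne.symm hx)
  have hy' : 0 < frob Y := lt_of_le_of_ne (frob_nonneg Y) (Ne.symm hy)
  set t : ℝ := Real.sqrt (frob Y / frob X) with ht
  have ht' : 0 < t := Real.sqrt_pos.mpr (by positivity)
  have ht2 : t ^ 2 = frob Y / frob X := Real.sq_sqrt (by positivity)
  have key := cross_half hRIP hdisj hcard ((t : ℂ) • X) (((t⁻¹ : ℝ) : ℂ) • Y)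
  rw [Matrix.mul_smul, Matrix.mul_smul, rinner_smul, rinner_smul, rinner_smul] at key
  rw [mul_inv_cancel₀ (ne_of_gt ht'), one_mul] at key
  have hXX : rinner X X = frob X ^ 2 := (frob_sq X).symm
  have hYY : rinner Y Y = frob Y ^ 2 := (frob_sq Y).symm
  rw [hXX, hYY] at key
  have harith : δ / 2 * (t * t * frob X ^ 2 + t⁻¹ * t⁻¹ * frob Y ^ 2)
      = δ * frob X * frob Y := by
    have h1 : t * t = frob Y / frob X := by rw [← sq]; exact ht2
    have h2 : t⁻¹ * t⁻¹ = frob X / frob Y := by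
      rw [← mul_inv, h1, inv_div]
    rw [h1, h2]
    field_simp
    ring
  rw [harith] at key
  exact key

lemma final_arith {a b x y : ℝ} (h : (1 - a) * x ^ 2 ≤ b * x * y)
    (hx : 0 < x) (hy : 0 ≤ y) : x * (1 - a) ≤ b * y := by
  nlinarith




end Aux

/-- `‖Ψ_{Ω̂}^† Ψ_{Ω_T∖Ω̂} D_{Ω_T∖Ω̂}‖_F ≤ (δ_{2P}/(1−δ_P)) ‖D_{Ω_T∖Ω̂}‖_F`. -/
theorem srip_pinv_cross_bound
    (Ψ : Matrix (Fin Np) (Fin L × Fin M) ℂ) (P : ℕ) (δP δ2P : ℝ)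
    (hRIP_P : SRIP (R := R) Ψ P δP) (hRIP_2P : SRIP (R := R) Ψ (2 * P) δ2P)
    (hδP : δP < 1) (hδ2P : δ2P < 1)
    (Ωhat ΩT : Finset (Fin L)) (hc1 : Ωhat.card ≤ P) (hc2 : ΩT.card ≤ P)
    (D : Matrix (Fin L × Fin M) (Fin R) ℂ) (hD : SuppOn ΩT D) :
    frob (bpinv Ψ Ωhat * (bsub Ψ (ΩT \ Ωhat) * rsub D (ΩT \ Ωhat))) ≤
      (δ2P / (1 - δP)) * frob (rsub D (ΩT \ Ωhat)) := by

  rcases Nat.eq_zero_or_pos R with hR | hR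
  · subst hR
    have hz : ∀ {γ : Type} [Fintype γ] (X : Matrix γ (Fin 0) ℂ), frob X = 0 := by
      intro γ _ X
      simp [frob]
    rw [hz, hz]
    simp
  · set Ω2 := ΩT \ Ωhat with hΩ2
    set E := rsub D Ω2 with hEdef
    have hsub : Ω2.card ≤ ΩT.card := Finset.card_le_card Finset.sdiff_subset
    have hcard2 : Ω2.card ≤ 2 * P := by omega
    have hdisj : Disjoint Ωhat Ω2 := disjoint_sdiff_self_right
    have hcards : Ωhat.card + Ω2.card ≤ 2 * P := by omega
    -- invertibility of the Gram matrix
    have hdet : IsUnit ((bsub Ψ Ωhat)ᴴ * bsub Ψ Ωhat).det := by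
      rw [isUnit_iff_ne_zero]
      intro h0
      obtain ⟨v, hv, hGv⟩ := Matrix.exists_mulVec_eq_zero_iff.mpr h0
      set V : Matrix ({l // l ∈ Ωhat} × Fin M) (Fin R) ℂ := fun q _ => v q with hV
      have hGV : ((bsub Ψ Ωhat)ᴴ * bsub Ψ Ωhat) * V = 0 := by
        ext q r
        have := congrFun hGv q
        simp only [Matrix.mulVec, dotProduct] at this
        simp only [Matrix.mul_apply, Matrix.zero_apply, hV]
        exact this
      have hAV : rinner (bsub Ψ Ωhat * V) (bsub Ψ Ωhat * V) = 0 := by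
        rw [rinner_mul_left, ← Matrix.mul_assoc, hGV]
        simp [rinner]
      have hrip := (hRIP_P Ωhat hc1 (expand Ωhat V)
        (suppOn_expand _ _ (Finset.Subset.refl _) V)).1
      rw [mul_expand, frob_expand, frob_sq (bsub Ψ Ωhat * V), hAV] at hrip
      have hle : frob V ^ 2 ≤ 0 := by nlinarith
      have heq : frob V ^ 2 = 0 := le_antisymm hle (sq_nonneg _)
      have hfV : frob V = 0 := by
        exact (pow_eq_zero_iff two_ne_zero).mp heq
      have hV0 : V = 0 := eq_zero_of_frob_eq_zero hfV
      apply hv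
      funext q
      have := congrFun (congrFun hV0 q) ⟨0, hR⟩
      simpa [hV] using this
    have hbp : bpinv Ψ Ωhat = ((bsub Ψ Ωhat)ᴴ * bsub Ψ Ωhat)⁻¹ * (bsub Ψ Ωhat)ᴴ := rfl
    set Z := ((bsub Ψ Ωhat)ᴴ * bsub Ψ Ωhat)⁻¹ *
      ((bsub Ψ Ωhat)ᴴ * (bsub Ψ Ω2 * E)) with hZdef
    have hLHS : bpinv Ψ Ωhat * (bsub Ψ Ω2 * E) = Z := by
      rw [hbp, hZdef, Matrix.mul_assoc]
    have hGZ : ((bsub Ψ Ωhat)ᴴ * bsub Ψ Ωhat) * Z = (bsub Ψ Ωhat)ᴴ * (bsub Ψ Ω2 * E) := by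
      rw [hZdef, ← Matrix.mul_assoc, Matrix.mul_nonsing_inv _ hdet, Matrix.one_mul]
    have hrip := (hRIP_P Ωhat hc1 (expand Ωhat Z)
      (suppOn_expand _ _ (Finset.Subset.refl _) Z)).1
    rw [mul_expand, frob_expand, frob_sq (bsub Ψ Ωhat * Z)] at hrip
    have hkey2 : rinner (bsub Ψ Ωhat * Z) (bsub Ψ Ωhat * Z)
        = rinner (bsub Ψ Ωhat * Z) (bsub Ψ Ω2 * E) := by
      rw [rinner_mul_left, ← Matrix.mul_assoc, hGZ, ← rinner_mul_left]
    have hcross := cross hRIP_2P hdisj hcards Z E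
    have hkey : (1 - δP) * frob Z ^ 2 ≤ δ2P * frob Z * frob E := by
      rw [hkey2] at hrip
      exact le_trans hrip hcross
    rw [hLHS]
    by_cases hz : frob Z = 0
    · rw [hz]
      by_cases he : frob E = 0
      · rw [he]
        simp
      · have hE' : 0 < frob E := lt_of_le_of_ne (frob_nonneg E) (Ne.symm he)
        have hδnn : 0 ≤ δ2P := by
          have h := hRIP_2P Ω2 hcard2 (expand Ω2 E)
            (suppOn_expand _ _ (Finset.Subset.refl _) E)
          rw [frob_expand] at h
          nlinarith [h.1, h.2, pow_pos hE' 2]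
        exact mul_nonneg (div_nonneg hδnn (by linarith)) (le_of_lt hE')
    · have hz' : 0 < frob Z := lt_of_le_of_ne (frob_nonneg Z) (Ne.symm hz)
      rw [div_mul_eq_mul_div, le_div_iff₀ (by linarith : (0:ℝ) < 1 - δP)]
      exact final_arith hkey hz' (frob_nonneg E)
end
end

section
/- Under the structured RIP hypothesis, for any block-index sets Ω₁, Ω₂ with Ω₁ ∩ Ω₂ = ∅, |Ω₁|+|Ω₂| ≤ P, and unit-Frobenius-norm matrices D' supported on Ω₁ and D supported on Ω₂: −δ_{|Ω₁|+|Ω₂|} ≤ Re⟨Ψ_{Ω₁}D'_{Ω₁}, Ψ_{Ω₂}D_{Ω₂}⟩ ≤ δ_{|Ω₁|+|Ω₂|}. -/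
open scoped BigOperators
open Matrix
noncomputable section

variable {Np M L R : ℕ}

lemma fsq_def {m n : Type*} [Fintype m] [Fintype n] (A : Matrix m n ℂ) :
    frob A ^ 2 = ∑ i, ∑ j, ‖A i j‖ ^ 2 := by
  rw [frob, Real.sq_sqrt]
  positivity

lemma cross_pt (a b : ℂ) :
    ‖a + b‖ ^ 2 = ‖a‖ ^ 2 + ‖b‖ ^ 2 + 2 * ((starRingEnd ℂ) a * b).re := by
  simp only [Complex.sq_norm, Complex.normSq_apply, Complex.mul_re,
    Complex.add_re, Complex.add_im, Complex.conj_re, Complex.conj_im]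
  ring

lemma trace_re_eq {m n : Type*} [Fintype m] [Fintype n] (A B : Matrix m n ℂ) :
    ((Aᴴ * B).trace).re = ∑ i, ∑ j, ((starRingEnd ℂ) (A i j) * B i j).re := by
  rw [Matrix.trace]
  simp only [Matrix.diag, Matrix.mul_apply, Matrix.conjTranspose_apply, Complex.re_sum]
  rw [Finset.sum_comm]
  rfl

lemma fsq_add {m n : Type*} [Fintype m] [Fintype n] (A B : Matrix m n ℂ) :
    frob (A + B) ^ 2 = frob A ^ 2 + frob B ^ 2 + 2 * ((Aᴴ * B).trace).re := by
  rw [fsq_def, fsq_def, fsq_def, trace_re_eq]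
  simp only [Matrix.add_apply, cross_pt]
  simp only [Finset.sum_add_distrib, Finset.mul_sum]

lemma fsq_sub {m n : Type*} [Fintype m] [Fintype n] (A B : Matrix m n ℂ) :
    frob (A - B) ^ 2 = frob A ^ 2 + frob B ^ 2 - 2 * ((Aᴴ * B).trace).re := by
  have := fsq_add A (-B)
  rw [Matrix.mul_neg, Matrix.trace_neg, Complex.neg_re] at this
  rw [sub_eq_add_neg, this]
  have : frob (-B) = frob B := by
    unfold frob; simp
  rw [this]; ring

lemma bsub_rsub_mul (Ψ : Matrix (Fin Np) (Fin L × Fin M) ℂ) (Ω : Finset (Fin L))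
    (D : Matrix (Fin L × Fin M) (Fin R) ℂ) (hD : SuppOn Ω D) :
    bsub Ψ Ω * rsub D Ω = Ψ * D := by
  ext i r
  rw [Matrix.mul_apply, Matrix.mul_apply, Fintype.sum_prod_type, Fintype.sum_prod_type]
  simp only [bsub, rsub, Matrix.submatrix_apply, id]
  have h1 : ∑ x : Fin L, ∑ y, Ψ i (x, y) * D (x, y) r
      = ∑ x ∈ Ω, ∑ y, Ψ i (x, y) * D (x, y) r := by
    refine (Finset.sum_subset (Finset.subset_univ Ω) ?_).symm
    intro l _ hl
    exact Finset.sum_eq_zero fun m _ => by rw [hD (l, m) r hl, mul_zero]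
  rw [h1, ← Finset.sum_coe_sort Ω (fun l => ∑ m, Ψ i (l, m) * D (l, m) r)]

/-- `−δ_{|Ω₁|+|Ω₂|} ≤ Re⟨Ψ_{Ω₁}D'_{Ω₁}, Ψ_{Ω₂}D_{Ω₂}⟩ ≤ δ_{|Ω₁|+|Ω₂|}`
for unit-Frobenius-norm `D'`, `D` supported on disjoint block sets. -/
theorem srip_inner_product_bound
    (Ψ : Matrix (Fin Np) (Fin L × Fin M) ℂ) (P : ℕ) (δ : ℕ → ℝ)
    (hRIP : ∀ k, SRIP (R := R) Ψ k (δ k))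
    (Ω₁ Ω₂ : Finset (Fin L)) (hdisj : Disjoint Ω₁ Ω₂)
    (hcard : Ω₁.card + Ω₂.card ≤ P)
    (D' D : Matrix (Fin L × Fin M) (Fin R) ℂ)
    (hD' : SuppOn Ω₁ D') (hD : SuppOn Ω₂ D)
    (hD'norm : frob D' = 1) (hDnorm : frob D = 1) :
    -δ (Ω₁.card + Ω₂.card) ≤
        (((bsub Ψ Ω₁ * rsub D' Ω₁)ᴴ * (bsub Ψ Ω₂ * rsub D Ω₂)).trace).re ∧
      (((bsub Ψ Ω₁ * rsub D' Ω₁)ᴴ * (bsub Ψ Ω₂ * rsub D Ω₂)).trace).re ≤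
        δ (Ω₁.card + Ω₂.card) := by
  set k := Ω₁.card + Ω₂.card with hk
  have hU : (Ω₁ ∪ Ω₂).card ≤ k := by
    rw [Finset.card_union_of_disjoint hdisj]
  have hS1 : SuppOn (Ω₁ ∪ Ω₂) (D' + D) := by
    intro p r hp
    simp only [Finset.mem_union, not_or] at hp
    simp [Matrix.add_apply, hD' p r hp.1, hD p r hp.2]
  have hS2 : SuppOn (Ω₁ ∪ Ω₂) (D' - D) := by
    intro p r hp
    simp only [Finset.mem_union, not_or] at hp
    simp [Matrix.sub_apply, hD' p r hp.1, hD p r hp.2]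
  have h1 := hRIP k (Ω₁ ∪ Ω₂) hU (D' + D) hS1
  have h2 := hRIP k (Ω₁ ∪ Ω₂) hU (D' - D) hS2
  rw [bsub_rsub_mul Ψ Ω₁ D' hD', bsub_rsub_mul Ψ Ω₂ D hD]
  have hortho : D'ᴴ * D = 0 := by
    ext r r'
    rw [Matrix.mul_apply]
    apply Finset.sum_eq_zero
    intro p _
    rw [Matrix.conjTranspose_apply]
    by_cases hp : p.1 ∈ Ω₁
    · rw [hD p r' (Finset.disjoint_left.mp hdisj hp), mul_zero]
    · simp [hD' p r hp]
  have hnadd : frob (D' + D) ^ 2 = 2 := by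
    rw [fsq_add, hortho, hD'norm, hDnorm]; norm_num
  have hnsub : frob (D' - D) ^ 2 = 2 := by
    rw [fsq_sub, hortho, hD'norm, hDnorm]; norm_num
  rw [hnadd] at h1
  rw [hnsub] at h2
  have hm1 : Ψ * (D' + D) = Ψ * D' + Ψ * D := Matrix.mul_add Ψ D' D
  have hm2 : Ψ * (D' - D) = Ψ * D' - Ψ * D := Matrix.mul_sub Ψ D' D
  rw [hm1, fsq_add] at h1
  rw [hm2, fsq_sub] at h2
  constructor <;> [linarith [h1.1, h2.2]; linarith [h1.2, h2.1]]
end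
end
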